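/- Every homogeneous tetrahedron has at least two vertices that are equilibrium points with respect to its centroid; that is, for a tetrahedron T with centroid c, there exist at least two vertices q of T such that the plane through q perpendicular to q − c supports T at q. -/

import Mathlib

open scoped RealInnerProductSpace

noncomputable section

abbrev E3 := EuclideanSpace ℝ (Fin 3)

/-- Vertex `q` of the convex body `T` is an equilibrium point with respect to `c`:
the plane through `q` perpendicular to `q - c` supports `T` at `q`. -/
def IsVertexEquil (T : Set E3) (c q : E3) : Prop :=
  ∀ x ∈ T, ⟪x - q, q - c⟫ ≤ 0

/-- Every homogeneous tetrahedron has at least two vertices that are equilibrium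
points with respect to its centroid. -/
theorem tetrahedron_two_unstable (p : Fin 4 → E3) (hp : AffineIndependent ℝ p) :
    ∃ i j : Fin 4, i ≠ j ∧
      IsVertexEquil (convexHull ℝ (Set.range p)) (Finset.univ.centroid ℝ p) (p i) ∧
      IsVertexEquil (convexHull ℝ (Set.range p)) (Finset.univ.centroid ℝ p) (p j) := by
  classical
  set c : E3 := Finset.univ.centroid ℝ p with hc
  set v : Fin 4 → E3 := fun k => p k - c with hv
  -- sum of v is zero
  have hcsum : c = ∑ k : Fin 4, ((4:ℝ)⁻¹) • p k := by
    rw [hc, Finset.centroid_def,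
      Finset.affineCombination_eq_linear_combination _ _ _
        (Finset.sum_centroidWeights_eq_one_of_nonempty ℝ _ Finset.univ_nonempty)]
    simp [Finset.centroidWeights_apply, Finset.card_univ]
  have hsum : ∑ k : Fin 4, v k = 0 := by
    simp only [hv, Finset.sum_sub_distrib, Finset.sum_const, Finset.card_univ,
      Fintype.card_fin]
    rw [hcsum, ← Finset.smul_sum]
    rw [← Nat.cast_smul_eq_nsmul ℝ, smul_smul]
    norm_num
  -- AM-GM style bound
  have hAM : ∀ a b : E3, 2 * ⟪a, b⟫ ≤ ‖a‖ ^ 2 + ‖b‖ ^ 2 := by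
    intro a b
    have h1 : (0:ℝ) ≤ ‖a - b‖ ^ 2 := sq_nonneg _
    have h2 : ‖a - b‖ ^ 2 = ‖a‖ ^ 2 - 2 * ⟪a, b⟫ + ‖b‖ ^ 2 := norm_sub_sq_real a b
    linarith
  -- reduction to vertices
  have hred : ∀ i : Fin 4, (∀ k : Fin 4, ⟪v k, v i⟫ ≤ ‖v i‖ ^ 2) →
      IsVertexEquil (convexHull ℝ (Set.range p)) c (p i) := by
    intro i hi x hx
    have hconv : Convex ℝ {y : E3 | ⟪y, p i - c⟫ ≤ ⟪p i, p i - c⟫} :=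
      convex_halfSpace_le (f := fun y : E3 => ⟪y, p i - c⟫)
        ⟨fun a b => inner_add_left a b _, fun r a => real_inner_smul_left a _ r⟩ _
    have hsub : Set.range p ⊆ {y : E3 | ⟪y, p i - c⟫ ≤ ⟪p i, p i - c⟫} := by
      rintro _ ⟨k, rfl⟩
      have h1 := hi k
      rw [← real_inner_self_eq_norm_sq] at h1
      simp only [hv] at h1
      rw [inner_sub_left, inner_sub_left] at h1
      simpa [Set.mem_setOf_eq] using h1
    have hx' : ⟪x, p i - c⟫ ≤ ⟪p i, p i - c⟫ :=
      convexHull_min hsub hconv hx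
    rw [inner_sub_left]
    linarith
  -- choose the two vertices farthest from the centroid
  obtain ⟨i, -, hi⟩ :=
    Finset.exists_max_image Finset.univ (fun k => ‖v k‖ ^ 2) Finset.univ_nonempty
  have hne : (Finset.univ.erase i).Nonempty := by
    apply Finset.card_pos.mp
    rw [Finset.card_erase_of_mem (Finset.mem_univ i)]
    simp
  obtain ⟨j, hjmem, hj⟩ :=
    Finset.exists_max_image (Finset.univ.erase i) (fun k => ‖v k‖ ^ 2) hne
  have hji : j ≠ i := (Finset.mem_erase.mp hjmem).1
  refine ⟨i, j, fun h => hji h.symm, hred i ?_, hred j ?_⟩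
  · intro k
    have h1 := hi k (Finset.mem_univ k)
    have h2 := hAM (v k) (v i)
    linarith
  · intro k
    by_cases hk : k = i
    · subst hk
      by_contra h
      push_neg at h
      -- the other two vertices
      set A := (Finset.univ.erase k).erase j with hA
      have hAcard : A.card = 2 := by
        rw [hA, Finset.card_erase_of_mem (Finset.mem_erase.mpr ⟨hji, Finset.mem_univ j⟩),
          Finset.card_erase_of_mem (Finset.mem_univ k)]
        simp
      obtain ⟨l, m, hlm, hlmA⟩ := Finset.card_eq_two.mp hAcard
      have hlA : l ∈ A := by rw [hlmA]; exact Finset.mem_insert_self _ _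
      have hmA : m ∈ A := by rw [hlmA]; simp
      have hlj : l ≠ j := (Finset.mem_erase.mp hlA).1
      have hlk : l ≠ k := (Finset.mem_erase.mp ((Finset.mem_erase.mp hlA).2)).1
      have hmj : m ≠ j := (Finset.mem_erase.mp hmA).1
      have hmk : m ≠ k := (Finset.mem_erase.mp ((Finset.mem_erase.mp hmA).2)).1
      have huniv : insert k (insert j ({l, m} : Finset (Fin 4))) = Finset.univ := by
        rw [← hlmA, hA, Finset.insert_erase (Finset.mem_erase.mpr ⟨hji, Finset.mem_univ j⟩),
          Finset.insert_erase (Finset.mem_univ k)]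
      have hsum4 : v k + (v j + (v l + v m)) = 0 := by
        rw [← hsum, ← huniv]
        rw [Finset.sum_insert (by simp [Ne.symm hji, Ne.symm hlk, Ne.symm hmk]),
          Finset.sum_insert (by simp [Ne.symm hlj, Ne.symm hmj]),
          Finset.sum_pair hlm]
      have hkey : v k + v j = -(v l + v m) := by
        have : (v k + v j) + (v l + v m) = 0 := by rw [← hsum4]; abel
        exact eq_neg_of_add_eq_zero_left this
      have hnorm : ‖v k + v j‖ ^ 2 = ‖v l + v m‖ ^ 2 := by rw [hkey, norm_neg]
      rw [norm_add_sq_real, norm_add_sq_real] at hnorm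
      have b1 := hAM (v l) (v m)
      have b2 := hj l (Finset.mem_erase.mpr ⟨hlk, Finset.mem_univ l⟩)
      have b3 := hj m (Finset.mem_erase.mpr ⟨hmk, Finset.mem_univ m⟩)
      have b4 := hi j (Finset.mem_univ j)
      linarith
    · have h1 := hj k (Finset.mem_erase.mpr ⟨hk, Finset.mem_univ k⟩)
      have h2 := hAM (v k) (v j)
      linarith
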